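/- Fix d ≥ 1 and set n = ⌊d/2⌋. Let γ be the alternating sign sequence for d given by γ_i = (−1)^{d−i} for 0 ≤ i ≤ d. Then z_i(γ) = g_i for all 0 ≤ i ≤ n, where g_i = 2^{d−2i}·d!·(d−i)!·(2d−4i+1)! / (i!·((d−2i)!)²·(2d−2i+1)!); that is, the geometric involutor corresponds to the alternating sign sequence. -/

import Mathlib

open MvPolynomial Finset

/-- A sign sequence for `d`: values `±1` with `s_{d−i} = (−1)^d s_i`. -/
def SignSeq (d : ℕ) (s : ℕ → ℂ) : Prop :=
  ∀ i ≤ d, (s i = 1 ∨ s i = -1) ∧ s (d - i) = (-1 : ℂ) ^ d * s i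

/-- `m_ℓ` is `1/2` if `d = 2ℓ` and `1` otherwise. -/
noncomputable def mcoef (d l : ℕ) : ℂ := if d = 2 * l then 1 / 2 else 1

noncomputable def E1 (d i : ℕ) : ℂ :=
  ((d.factorial : ℂ) * ((2 * d - 4 * i + 1).factorial : ℂ)) /
    ((2 : ℂ) ^ (2 * (i : ℤ) - 1) * ((d - 2 * i).factorial : ℂ) ^ 2)

noncomputable def E2 (d : ℕ) (s : ℕ → ℂ) (i : ℕ) : ℂ :=
  ∑ e ∈ range (i + 1), ∑ l ∈ range (d / 2 + 1), ∑ p ∈ range (l + 1),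
    ∑ q ∈ range (d - l + 1),
      if p + q = d - 2 * e then
        s l * mcoef d l * (-1 : ℂ) ^ q *
            (((d - 2 * e).factorial : ℂ) * ((d - i - e).factorial : ℂ)) /
          (((2 * d - 2 * i - 2 * e + 1).factorial : ℂ) * ((i - e).factorial : ℂ) *
            (p.factorial : ℂ) * (q.factorial : ℂ) * ((l - p).factorial : ℂ) *
            ((d - l - q).factorial : ℂ))
      else 0

/-- `z_i(s) = E_{1,i} · E_{2,i}`. -/
noncomputable def zfun (d : ℕ) (s : ℕ → ℂ) (i : ℕ) : ℂ := E1 d i * E2 d s i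

/-- The coefficients `g_i` of the geometric involutor. -/
noncomputable def gcoef (d i : ℕ) : ℂ :=
  ((2 : ℂ) ^ (d - 2 * i) * (d.factorial : ℂ) * ((d - i).factorial : ℂ) *
      ((2 * d - 4 * i + 1).factorial : ℂ)) /
    ((i.factorial : ℂ) * ((d - 2 * i).factorial : ℂ) ^ 2 * ((2 * d - 2 * i + 1).factorial : ℂ))

section Aux

lemma neg_one_pow_congr' {a b : ℕ} (h : Even (a + b)) : ((-1:ℂ))^a = (-1)^b := by
  have hb : ((-1:ℂ))^b * (-1)^b = 1 := by
    rw [← pow_add]; exact Even.neg_one_pow ⟨b, rfl⟩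
  calc ((-1:ℂ))^a = (-1)^a * ((-1)^b * (-1)^b) := by rw [hb, mul_one]
    _ = (-1)^(a+b) * (-1)^b := by rw [pow_add, mul_assoc]
    _ = (-1)^b := by rw [Even.neg_one_pow h, one_mul]

lemma star_antidiag (d m : ℕ) :
    ∑ l ∈ range (d+1), ((d.choose l : ℂ) *
      ∑ x ∈ Finset.HasAntidiagonal.antidiagonal m,
        ((l.choose x.1 : ℂ) * ((-1:ℂ)^((d-l) - x.2) * ((d-l).choose x.2 : ℂ))))
      = if d = m then 2^d else 0 := by
  have h1 : ((Polynomial.C (2:ℂ)) * Polynomial.X)^d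
      = ∑ l ∈ range (d+1), (1+Polynomial.X)^l * (Polynomial.X - 1)^(d-l) * Polynomial.C ((d.choose l : ℂ)) := by
    have h : (Polynomial.C (2:ℂ)) * Polynomial.X = (1+Polynomial.X) + (Polynomial.X - 1) := by
      have : Polynomial.C (2:ℂ) = 2 := by rw [show (2:ℂ) = ((2:ℕ):ℂ) by norm_num, Polynomial.C_eq_natCast]; norm_num
      rw [this]; ring
    rw [h, add_pow]
    refine Finset.sum_congr rfl fun l _ => ?_
    rw [Polynomial.C_eq_natCast]
  have h2 := congrArg (fun f => Polynomial.coeff f m) h1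
  simp only [Polynomial.finset_sum_coeff] at h2
  rw [mul_pow, ← Polynomial.C_pow, Polynomial.coeff_C_mul, Polynomial.coeff_X_pow] at h2
  have h3 : ∀ l ∈ range (d+1),
      ((1+Polynomial.X)^l * (Polynomial.X - 1)^(d-l) * Polynomial.C ((d.choose l : ℂ))).coeff m
      = (d.choose l : ℂ) * ∑ x ∈ Finset.HasAntidiagonal.antidiagonal m,
          ((l.choose x.1 : ℂ) * ((-1:ℂ)^((d-l) - x.2) * ((d-l).choose x.2 : ℂ))) := by
    intro l _
    rw [Polynomial.coeff_mul_C, Polynomial.coeff_mul, mul_comm]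
    congr 1
    refine Finset.sum_congr rfl fun x _ => ?_
    have e1 : ((1+Polynomial.X : Polynomial ℂ)^l).coeff x.1 = (l.choose x.1 : ℂ) :=
      Polynomial.coeff_one_add_X_pow ℂ l x.1
    have e2 : ((Polynomial.X - 1 : Polynomial ℂ)^(d-l)).coeff x.2
        = (-1:ℂ)^((d-l) - x.2) * ((d-l).choose x.2 : ℂ) := by
      have : (Polynomial.X - 1 : Polynomial ℂ) = Polynomial.X + Polynomial.C (-1) := by
        rw [map_neg, Polynomial.C_1]; ring
      rw [this, Polynomial.coeff_X_add_C_pow]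
    rw [e1, e2]
  rw [Finset.sum_congr rfl h3] at h2
  rw [← h2]
  by_cases hdm : d = m <;> simp [hdm, eq_comm]

end Aux

lemma antidiag_to_rect (L Q m : ℕ) (f : ℕ → ℕ → ℂ)
    (h1 : ∀ p q, p + q = m → L < p → f p q = 0)
    (h2 : ∀ p q, p + q = m → Q < q → f p q = 0) :
    ∑ x ∈ Finset.HasAntidiagonal.antidiagonal m, f x.1 x.2
      = ∑ p ∈ range (L+1), ∑ q ∈ range (Q+1), if p + q = m then f p q else 0 := by
  rw [← Finset.sum_product']
  rw [← Finset.sum_filter]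
  refine (Finset.sum_subset ?_ ?_).symm
  · intro x hx
    simp only [Finset.mem_filter] at hx
    simpa using hx.2
  · intro x hx hx2
    simp only [Finset.HasAntidiagonal.mem_antidiagonal] at hx
    simp only [Finset.mem_filter, Finset.mem_product, Finset.mem_range, not_and_or, not_lt] at hx2
    rcases hx2 with h | h
    · rcases h with h | h
      · exact h1 x.1 x.2 hx (by omega)
      · exact h2 x.1 x.2 hx (by omega)
    · exact absurd hx h

lemma key_rect (d m : ℕ) :
    (∑ l ∈ range (d+1), ∑ p ∈ range (l+1), ∑ q ∈ range (d-l+1),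
      if p + q = m then ((-1:ℂ))^(d-l+q) /
        ((p.factorial:ℂ) * (q.factorial:ℂ) * ((l-p).factorial:ℂ) * ((d-l-q).factorial:ℂ))
      else 0)
      = if m = d then 2^d / (d.factorial:ℂ) else 0 := by
  have star := star_antidiag d m
  have hrect : ∀ l ∈ range (d+1),
      (d.choose l : ℂ) * ∑ x ∈ Finset.HasAntidiagonal.antidiagonal m,
          ((l.choose x.1 : ℂ) * ((-1:ℂ)^((d-l) - x.2) * ((d-l).choose x.2 : ℂ)))
      = ∑ p ∈ range (l+1), ∑ q ∈ range (d-l+1),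
          if p + q = m then
            (d.choose l : ℂ) * ((l.choose p : ℂ) * ((-1:ℂ)^((d-l) - q) * ((d-l).choose q : ℂ)))
          else 0 := by
    intro l _
    have har := antidiag_to_rect l (d-l) m
      (fun p q => (l.choose p : ℂ) * ((-1:ℂ)^((d-l) - q) * ((d-l).choose q : ℂ)))
      (fun p q _ hp => by simp [Nat.choose_eq_zero_of_lt hp])
      (fun p q _ hq => by simp [Nat.choose_eq_zero_of_lt hq])
    rw [har, Finset.mul_sum]
    refine sum_congr rfl fun p _ => ?_
    rw [Finset.mul_sum]
    refine sum_congr rfl fun q _ => ?_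
    rw [mul_ite, mul_zero]
  rw [Finset.sum_congr rfl hrect] at star
  have hdf : (d.factorial : ℂ) ≠ 0 := Nat.cast_ne_zero.2 (Nat.factorial_ne_zero d)
  calc (∑ l ∈ range (d+1), ∑ p ∈ range (l+1), ∑ q ∈ range (d-l+1),
      if p + q = m then ((-1:ℂ))^(d-l+q) /
        ((p.factorial:ℂ) * (q.factorial:ℂ) * ((l-p).factorial:ℂ) * ((d-l-q).factorial:ℂ))
      else 0)
      = (∑ l ∈ range (d+1), ∑ p ∈ range (l+1), ∑ q ∈ range (d-l+1),
          if p + q = m then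
            (d.choose l : ℂ) * ((l.choose p : ℂ) * ((-1:ℂ)^((d-l) - q) * ((d-l).choose q : ℂ)))
          else 0) / (d.factorial : ℂ) := by
        rw [Finset.sum_div]
        refine sum_congr rfl fun l hl => ?_
        rw [Finset.sum_div]
        refine sum_congr rfl fun p hp => ?_
        rw [Finset.sum_div]
        refine sum_congr rfl fun q hq => ?_
        simp only [mem_range] at hl hp hq
        have hld : l ≤ d := by omega
        have hpl : p ≤ l := by omega
        have hqd : q ≤ d - l := by omega
        split_ifs with h
        · rw [neg_one_pow_congr' (a := (d-l)-q) (b := d-l+q) ⟨d-l, by omega⟩]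
          have hnat : d.choose l * (l.choose p * p.factorial * (l - p).factorial) *
              ((d - l).choose q * q.factorial * (d - l - q).factorial) = d.factorial := by
            rw [Nat.choose_mul_factorial_mul_factorial hpl,
              Nat.choose_mul_factorial_mul_factorial hqd,
              Nat.choose_mul_factorial_mul_factorial hld]
          have hnc : ((d.choose l : ℂ)) * ((l.choose p : ℂ) * (p.factorial:ℂ) * ((l-p).factorial:ℂ)) *
              (((d-l).choose q : ℂ) * (q.factorial:ℂ) * ((d-l-q).factorial:ℂ)) = (d.factorial : ℂ) := by
            exact_mod_cast congrArg (Nat.cast : ℕ → ℂ) hnat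
          have h1 : ((p.factorial:ℂ)) ≠ 0 := Nat.cast_ne_zero.2 (Nat.factorial_ne_zero _)
          have h2 : ((q.factorial:ℂ)) ≠ 0 := Nat.cast_ne_zero.2 (Nat.factorial_ne_zero _)
          have h3 : (((l-p).factorial:ℂ)) ≠ 0 := Nat.cast_ne_zero.2 (Nat.factorial_ne_zero _)
          have h4 : (((d-l-q).factorial:ℂ)) ≠ 0 := Nat.cast_ne_zero.2 (Nat.factorial_ne_zero _)
          have hB : ((p.factorial:ℂ) * (q.factorial:ℂ) * ((l-p).factorial:ℂ) * ((d-l-q).factorial:ℂ)) ≠ 0 :=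
            mul_ne_zero (mul_ne_zero (mul_ne_zero h1 h2) h3) h4
          rw [div_eq_div_iff hB hdf]
          linear_combination (-((-1:ℂ))^(d-l) * ((-1:ℂ))^q) * hnc
        · simp
    _ = (if d = m then (2:ℂ)^d else 0) / (d.factorial : ℂ) := by rw [star]
    _ = if m = d then 2^d / (d.factorial:ℂ) else 0 := by
        by_cases h : d = m <;> simp [h, eq_comm]

noncomputable def ttf (d m l : ℕ) : ℂ :=
  ∑ p ∈ range (l+1), ∑ q ∈ range (d-l+1),
    if p + q = m then ((-1:ℂ))^(d-l+q) /
      ((p.factorial:ℂ) * (q.factorial:ℂ) * ((l-p).factorial:ℂ) * ((d-l-q).factorial:ℂ))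
    else 0

lemma ttf_sym (d m l : ℕ) (hl : l ≤ d) (hpar : Even (d + m)) :
    ttf d m (d - l) = ttf d m l := by
  unfold ttf
  have h1 : d - (d - l) = l := by omega
  simp only [h1]
  rw [Finset.sum_comm]
  refine sum_congr rfl fun a ha => sum_congr rfl fun b hb => ?_
  simp only [mem_range] at ha hb
  by_cases hc : b + a = m
  · rw [if_pos hc, if_pos (by omega)]
    obtain ⟨c, hcc⟩ := hpar
    rw [neg_one_pow_congr' (a := l + a) (b := d - l + b) ⟨c, by omega⟩]
    ring
  · rw [if_neg hc, if_neg (by omega)]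

lemma half_sum (d : ℕ) (t : ℕ → ℂ) (hsym : ∀ l ≤ d, t (d - l) = t l) :
    ∑ l ∈ range (d+1), t l = 2 * ∑ l ∈ range (d/2+1), mcoef d l * t l := by
  set n := d / 2 with hn
  have hnd : n ≤ d := Nat.div_le_self d 2
  have hsplit : ∑ l ∈ range (d+1), t l
      = (∑ l ∈ range (n+1), t l) + ∑ l ∈ Ico (n+1) (d+1), t l := by
    rw [range_eq_Ico, ← Finset.sum_Ico_consecutive _ (by omega : 0 ≤ n+1) (by omega : n+1 ≤ d+1),
      ← range_eq_Ico]
  have hrefl : ∑ l ∈ Ico (n+1) (d+1), t l = ∑ l ∈ range (d - n), t l := by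
    refine Finset.sum_nbij' (fun l => d - l) (fun l => d - l) ?_ ?_ ?_ ?_ ?_
    · intro a ha; simp only [mem_Ico] at ha; simp only [mem_range]; omega
    · intro a ha; simp only [mem_range] at ha; simp only [mem_Ico]; omega
    · intro a ha; simp only [mem_Ico] at ha; show d - (d - a) = a; omega
    · intro a ha; simp only [mem_range] at ha; show d - (d - a) = a; omega
    · intro a ha; simp only [mem_Ico] at ha; exact (hsym a (by omega)).symm
  rcases Nat.even_or_odd d with ⟨k, hk⟩ | ⟨k, hk⟩
  · -- d = 2k, n = k
    have hkn : n = k := by omega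
    have hdn : d - n = n := by omega
    have hm1 : ∀ l ∈ range n, mcoef d l * t l = t l := by
      intro l hl; simp only [mem_range] at hl
      unfold mcoef; rw [if_neg (by omega)]; ring
    have hm2 : mcoef d n = 1 / 2 := by unfold mcoef; rw [if_pos (by omega)]
    rw [hsplit, hrefl, hdn, Finset.sum_range_succ, Finset.sum_range_succ,
      Finset.sum_congr rfl hm1, hm2]
    ring
  · -- d = 2k+1, n = k, d - n = n + 1
    have hdn : d - n = n + 1 := by omega
    have hm1 : ∀ l ∈ range (n+1), mcoef d l * t l = t l := by
      intro l hl; simp only [mem_range] at hl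
      unfold mcoef; rw [if_neg (by omega)]; ring
    rw [hsplit, hrefl, hdn, Finset.sum_congr rfl hm1]
    ring

lemma keyF (d e : ℕ) (hd : 1 ≤ d) (he : 2*e ≤ d) :
    ∑ l ∈ range (d/2+1), mcoef d l * ttf d (d-2*e) l
      = if e = 0 then (2:ℂ)^(d-1) / (d.factorial:ℂ) else 0 := by
  have hhalf := half_sum d (ttf d (d-2*e)) (fun l hl => ttf_sym d (d-2*e) l hl ⟨d - e, by omega⟩)
  have hkr := key_rect d (d - 2*e)
  have hsum : ∑ l ∈ range (d+1), ttf d (d-2*e) l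
      = if d - 2*e = d then 2^d / (d.factorial:ℂ) else 0 := by
    rw [← hkr]; exact Finset.sum_congr rfl fun l _ => rfl
  rw [hsum] at hhalf
  rcases Nat.eq_zero_or_pos e with he0 | he1
  · subst he0
    norm_num at hhalf ⊢
    have h2 : (2:ℂ)^d = 2 * (2:ℂ)^(d-1) := by
      rw [← pow_succ']; congr 1; omega
    refine mul_left_cancel₀ (two_ne_zero (α := ℂ)) ?_
    rw [← hhalf, h2]; ring
  · rw [if_neg (by omega : ¬ (d - 2*e = d))] at hhalf
    rw [if_neg (by omega : ¬ e = 0)]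
    rcases mul_eq_zero.mp hhalf.symm with h | h
    · exact absurd h two_ne_zero
    · exact h

lemma fac_nz (k : ℕ) : ((k.factorial : ℂ)) ≠ 0 := Nat.cast_ne_zero.2 (Nat.factorial_ne_zero k)

lemma E2_val (d i : ℕ) (hd : 1 ≤ d) (hi : i ≤ d/2) :
    E2 d (fun k => (-1:ℂ)^(d-k)) i
      = (2:ℂ)^(d-1) * (((d-i).factorial:ℂ)) /
          (((2*d-2*i+1).factorial:ℂ) * ((i.factorial:ℂ))) := by
  have hi2 : 2 * i ≤ d := by omega
  unfold E2
  have step : ∀ e ∈ range (i+1),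
      (∑ l ∈ range (d / 2 + 1), ∑ p ∈ range (l + 1), ∑ q ∈ range (d - l + 1),
        if p + q = d - 2 * e then
          (fun k => (-1:ℂ)^(d-k)) l * mcoef d l * (-1 : ℂ) ^ q *
              (((d - 2 * e).factorial : ℂ) * ((d - i - e).factorial : ℂ)) /
            (((2 * d - 2 * i - 2 * e + 1).factorial : ℂ) * ((i - e).factorial : ℂ) *
              (p.factorial : ℂ) * (q.factorial : ℂ) * ((l - p).factorial : ℂ) *
              ((d - l - q).factorial : ℂ))
        else 0)
      = ((((d - 2*e).factorial : ℂ) * ((d - i - e).factorial : ℂ)) /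
          (((2*d - 2*i - 2*e + 1).factorial : ℂ) * (((i-e).factorial : ℂ)))) *
        ∑ l ∈ range (d/2+1), mcoef d l * ttf d (d-2*e) l := by
    intro e he
    simp only [mem_range] at he
    rw [Finset.mul_sum]
    refine sum_congr rfl fun l hl => ?_
    simp only [mem_range] at hl
    simp only [ttf, Finset.mul_sum]
    refine sum_congr rfl fun p hp => sum_congr rfl fun q hq => ?_
    simp only [mem_range] at hp hq
    by_cases hc : p + q = d - 2 * e
    · rw [if_pos hc, if_pos hc, pow_add]
      simp only [div_eq_mul_inv, mul_inv]
      ring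
    · rw [if_neg hc, if_neg hc, mul_zero, mul_zero]
  rw [Finset.sum_congr rfl step]
  have step2 : ∀ e ∈ range (i+1),
      ((((d - 2*e).factorial : ℂ) * ((d - i - e).factorial : ℂ)) /
          (((2*d - 2*i - 2*e + 1).factorial : ℂ) * (((i-e).factorial : ℂ)))) *
        (∑ l ∈ range (d/2+1), mcoef d l * ttf d (d-2*e) l)
      = if e = 0 then
          ((((d - 2*e).factorial : ℂ) * ((d - i - e).factorial : ℂ)) /
            (((2*d - 2*i - 2*e + 1).factorial : ℂ) * (((i-e).factorial : ℂ)))) *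
          ((2:ℂ)^(d-1) / (d.factorial:ℂ))
        else 0 := by
    intro e he
    simp only [mem_range] at he
    rw [keyF d e hd (by omega)]
    by_cases h0 : e = 0
    · rw [if_pos h0, if_pos h0]
    · rw [if_neg h0, if_neg h0, mul_zero]
  rw [Finset.sum_congr rfl step2, Finset.sum_ite_eq' (range (i+1)) 0, if_pos (by simp)]
  simp only [Nat.mul_zero, Nat.sub_zero]
  have n1 := fac_nz d; have n2 := fac_nz (d-i); have n3 := fac_nz (2*d-2*i+1); have n4 := fac_nz i
  field_simp

/-- the geometric involutor corresponds to the alternating sign sequence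
`γ_i = (−1)^{d−i}`: one has `z_i(γ) = g_i` for all `0 ≤ i ≤ ⌊d/2⌋`. -/
theorem stmt5 (d : ℕ) (hd : 1 ≤ d) :
    ∀ i ≤ d / 2, zfun d (fun k => (-1 : ℂ) ^ (d - k)) i = gcoef d i := by
  intro i hi
  have hi2 : 2 * i ≤ d := by omega
  unfold zfun gcoef E1
  rw [E2_val d i hd hi]
  have hz : (2:ℂ) ^ (2 * (i:ℤ) - 1) = (2:ℂ)^(2*i) / 2 := by
    rw [zpow_sub₀ (two_ne_zero), zpow_one,
      show (2*(i:ℤ)) = ((2*i:ℕ):ℤ) by push_cast; ring, zpow_natCast]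
  have hkey : (2:ℂ)^(d-1) = (2:ℂ)^(d-2*i) * (2:ℂ) ^ (2 * (i:ℤ) - 1) := by
    rw [hz, mul_div_assoc', ← pow_add, eq_div_iff (two_ne_zero), ← pow_succ]
    congr 1; omega
  have hXnz : (2:ℂ) ^ (2 * (i:ℤ) - 1) ≠ 0 := zpow_ne_zero _ two_ne_zero
  have n1 := fac_nz d; have n2 := fac_nz (d-i); have n3 := fac_nz (2*d-2*i+1)
  have n4 := fac_nz i; have n5 := fac_nz (d-2*i); have n6 := fac_nz (2*d-4*i+1)
  rw [hkey]
  field_simp
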